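/- arXiv:1112.3055 — 4 statements merged into one kernel-verified Lean document; each statement's English description precedes it below -/
import Mathlib

section
/- If $\hat A$ minimizes $F(A) = \|A - X\|_2 + \lambda \|A\|_1$ over $m_1 \times m_2$ real matrices, where $\|\cdot\|_2$ is the Frobenius norm, $\|\cdot\|_1$ is the nuclear norm and $\lambda > 0$, then $\mathrm{rank}(\hat A) \le 1/\lambda^2$. -/
open Matrix

noncomputable def frobNorm {m n : ℕ} (A : Matrix (Fin m) (Fin n) ℝ) : ℝ :=
  Real.sqrt (∑ i, ∑ j, (A i j) ^ 2)

/-- Nuclear norm: sum of singular values, i.e. square roots of eigenvalues of `Aᴴ * A`. -/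
noncomputable def nuclearNorm {m n : ℕ} (A : Matrix (Fin m) (Fin n) ℝ) : ℝ :=
  ∑ i, Real.sqrt ((Matrix.isHermitian_conjTranspose_mul_self A).eigenvalues i)

/-- Operator (spectral) norm: supremum of `‖A v‖` over Euclidean unit vectors `v`. -/
noncomputable def opNorm {m n : ℕ} (M : Matrix (Fin m) (Fin n) ℝ) : ℝ :=
  sSup {c | ∃ v : Fin n → ℝ, ∑ i, (v i) ^ 2 = 1 ∧
    c = Real.sqrt (∑ i, (M.mulVec v i) ^ 2)}

def IsOrthProj {k : ℕ} (P : Matrix (Fin k) (Fin k) ℝ) : Prop :=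
  P.IsSymm ∧ P * P = P

/-- `P` is the orthogonal projector onto the orthogonal complement of the column space of `A`
(the span of the left singular vectors of `A` for nonzero singular values is the column space,
and similarly the row space, i.e. column space of `Aᵀ`, for right singular vectors). -/
def IsProjPerpCol {m n : ℕ} (A : Matrix (Fin m) (Fin n) ℝ)
    (P : Matrix (Fin m) (Fin m) ℝ) : Prop :=
  IsOrthProj P ∧ P * A = 0 ∧ P.rank = m - A.rank

/-- `P` is the orthogonal projector onto the column space of `A`. -/
def IsProjCol {m n : ℕ} (A : Matrix (Fin m) (Fin n) ℝ)
    (P : Matrix (Fin m) (Fin m) ℝ) : Prop :=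
  IsOrthProj P ∧ P * A = A ∧ P.rank = A.rank

lemma conj_hermitian {n : ℕ} (V : Matrix (Fin n) (Fin n) ℝ) (a : Fin n → ℝ) :
    (V * diagonal a * star V)ᴴ = V * diagonal a * star V := by
  simp [conjTranspose_mul, Matrix.star_eq_conjTranspose, diagonal_conjTranspose, mul_assoc]

lemma unitary_conj_mul {n : ℕ} {V : Matrix (Fin n) (Fin n) ℝ}
    (hV : V ∈ Matrix.unitaryGroup (Fin n) ℝ) (a b : Fin n → ℝ) :
    (V * diagonal a * star V) * (V * diagonal b * star V)
      = V * diagonal (fun i => a i * b i) * star V := by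
  have h1 : star V * V = 1 := (Matrix.mem_unitaryGroup_iff').mp hV
  calc (V * diagonal a * star V) * (V * diagonal b * star V)
      = V * (diagonal a * (star V * V) * diagonal b) * star V := by simp only [mul_assoc]
    _ = V * diagonal (fun i => a i * b i) * star V := by
        rw [h1, mul_one, diagonal_mul_diagonal]

lemma trace_conj {n : ℕ} {V : Matrix (Fin n) (Fin n) ℝ}
    (hV : V ∈ Matrix.unitaryGroup (Fin n) ℝ) (a : Fin n → ℝ) :
    (V * diagonal a * star V).trace = ∑ i, a i := by
  rw [Matrix.trace_mul_cycle, (Matrix.mem_unitaryGroup_iff').mp hV, one_mul, trace_diagonal]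

open scoped MatrixOrder Matrix.Norms.L2Operator in
lemma nuclearNorm_eq_of_conj {m n : ℕ} (A : Matrix (Fin m) (Fin n) ℝ)
    {V : Matrix (Fin n) (Fin n) ℝ} (hV : V ∈ Matrix.unitaryGroup (Fin n) ℝ)
    (c : Fin n → ℝ) (hc : ∀ j, 0 ≤ c j)
    (h : Aᴴ * A = V * Matrix.diagonal c * star V) :
    nuclearNorm A = ∑ j, Real.sqrt (c j) := by
  have hP : (Aᴴ * A).PosSemidef := posSemidef_conjTranspose_mul_self A
  set Q : Matrix (Fin n) (Fin n) ℝ := V * diagonal (fun j => Real.sqrt (c j)) * star V with hQdef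
  have hQpsd : Q.PosSemidef := by
    rw [hQdef, Matrix.star_eq_conjTranspose]
    exact (posSemidef_diagonal_iff.mpr fun j => Real.sqrt_nonneg _).mul_mul_conjTranspose_same V
  have hsq : Q ^ 2 = Aᴴ * A := by
    have hcc : (fun i => Real.sqrt (c i) * Real.sqrt (c i)) = c :=
      funext fun j => Real.mul_self_sqrt (hc j)
    rw [sq, hQdef, unitary_conj_mul hV, hcc, h]
  have hQeq : Q = CFC.sqrt (Aᴴ * A) :=
    (CFC.sqrt_unique (by rw [← sq]; exact hsq) (Matrix.nonneg_iff_posSemidef.mpr hQpsd)).symm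
  have h1 : nuclearNorm A = (CFC.sqrt (Aᴴ * A)).trace := by
    rw [CFC.sqrt_eq_cfc, cfc_nnreal_eq_real _ (Aᴴ * A) (Matrix.nonneg_iff_posSemidef.mpr hP),
      hP.1.cfc_eq, IsHermitian.cfc, Unitary.conjStarAlgAut_apply]
    rw [Matrix.trace_mul_cycle, (Matrix.mem_unitaryGroup_iff').mp hP.1.eigenvectorUnitary.2,
      one_mul, trace_diagonal]
    simp only [nuclearNorm, Function.comp_apply, Real.coe_sqrt, Real.coe_toNNReal',
      RCLike.ofReal_real_eq_id, id]
    exact Finset.sum_congr rfl fun j _ => by rw [max_eq_left (hP.eigenvalues_nonneg j)]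
  rw [h1, ← hQeq, hQdef, trace_conj hV]

lemma conj_sandwich {m n : ℕ} (B : Matrix (Fin m) (Fin n) ℝ)
    {V : Matrix (Fin n) (Fin n) ℝ} (hV : V ∈ Matrix.unitaryGroup (Fin n) ℝ)
    (μ a : Fin n → ℝ) (hB : Bᴴ * B = V * diagonal μ * star V) :
    (B * (V * diagonal a * star V))ᴴ * (B * (V * diagonal a * star V))
      = V * diagonal (fun j => a j * μ j * a j) * star V := by
  rw [conjTranspose_mul, conj_hermitian]
  calc (V * diagonal a * star V) * Bᴴ * (B * (V * diagonal a * star V))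
      = (V * diagonal a * star V) * (Bᴴ * B) * (V * diagonal a * star V) := by
        simp only [Matrix.mul_assoc]
    _ = (V * diagonal a * star V) * (V * diagonal μ * star V) * (V * diagonal a * star V) := by
        rw [hB]
    _ = V * diagonal (fun j => a j * μ j * a j) * star V := by
        rw [unitary_conj_mul hV, unitary_conj_mul hV]

lemma frobNorm_eq_norm {m n : ℕ} (A : Matrix (Fin m) (Fin n) ℝ) :
    frobNorm A = ‖(WithLp.equiv 2 (Fin m × Fin n → ℝ)).symm (fun p => A p.1 p.2)‖ := by
  rw [EuclideanSpace.norm_eq, frobNorm]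
  congr 1
  rw [Fintype.sum_prod_type]
  congr 1; ext i; congr 1; ext j
  simp [WithLp.equiv_symm_apply, sq_abs]

lemma frobNorm_sub_le {m n : ℕ} (A B : Matrix (Fin m) (Fin n) ℝ) :
    frobNorm (A - B) ≤ frobNorm A + frobNorm B := by
  rw [frobNorm_eq_norm, frobNorm_eq_norm, frobNorm_eq_norm]
  have : (WithLp.equiv 2 (Fin m × Fin n → ℝ)).symm (fun p => (A - B) p.1 p.2)
      = (WithLp.equiv 2 (Fin m × Fin n → ℝ)).symm (fun p => A p.1 p.2)
        - (WithLp.equiv 2 (Fin m × Fin n → ℝ)).symm (fun p => B p.1 p.2) := rfl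
  rw [this]
  exact norm_sub_le _ _

lemma frobNorm_eq_sqrt_trace {m n : ℕ} (A : Matrix (Fin m) (Fin n) ℝ) :
    frobNorm A = Real.sqrt (Aᴴ * A).trace := by
  rw [frobNorm]
  congr 1
  simp [Matrix.trace, Matrix.mul_apply, Matrix.diag, sq]
  rw [Finset.sum_comm]

/-- If $\hat A$ minimizes $A ↦ ‖A - X‖_2 + λ‖A‖_1$ then $\mathrm{rank}(\hat A) ≤ 1/λ^2$. -/
theorem stmt0 {m1 m2 : ℕ} (X : Matrix (Fin m1) (Fin m2) ℝ) (lam : ℝ) (hlam : 0 < lam)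
    (Ahat : Matrix (Fin m1) (Fin m2) ℝ)
    (hmin : ∀ A : Matrix (Fin m1) (Fin m2) ℝ,
      frobNorm (Ahat - X) + lam * nuclearNorm Ahat ≤ frobNorm (A - X) + lam * nuclearNorm A) :
    (Ahat.rank : ℝ) ≤ 1 / lam ^ 2 := by
  classical
  have hH : (Ahatᴴ * Ahat).IsHermitian := isHermitian_conjTranspose_mul_self Ahat
  set μ : Fin m2 → ℝ := hH.eigenvalues with hμdef
  have hμ0 : ∀ j, 0 ≤ μ j := fun j =>
    (posSemidef_conjTranspose_mul_self Ahat).eigenvalues_nonneg j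
  set V : Matrix (Fin m2) (Fin m2) ℝ := ↑hH.eigenvectorUnitary with hVdef
  have hV : V ∈ Matrix.unitaryGroup (Fin m2) ℝ := hH.eigenvectorUnitary.2
  have hspec : Ahatᴴ * Ahat = V * diagonal μ * star V := hH.spectral_theorem
  have hTrans : Ahatᴴ = Ahatᵀ := rfl
  set S : Finset (Fin m2) := Finset.univ.filter (fun j => μ j ≠ 0) with hSdef
  have hrank : (Ahat.rank : ℝ) = (S.card : ℝ) := by
    rw [← Matrix.rank_transpose_mul_self Ahat, ← hTrans, hH.rank_eq_card_non_zero_eigs]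
    norm_cast
    rw [Fintype.card_subtype]
  rcases S.eq_empty_or_nonempty with hS | hS
  · rw [hrank, hS]
    simp
    positivity
  -- main case
  set σ : Fin m2 → ℝ := fun j => Real.sqrt (μ j) with hσdef
  set t : ℝ := Real.sqrt (S.inf' hS μ) with htdef
  obtain ⟨j0, hj0S, hj0⟩ := S.exists_mem_eq_inf' hS μ
  have hμj0 : 0 < μ j0 := by
    have := (Finset.mem_filter.mp hj0S).2
    exact lt_of_le_of_ne (hμ0 j0) (Ne.symm this)
  have ht : 0 < t := by rw [htdef, hj0]; exact Real.sqrt_pos.mpr hμj0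
  have htle : ∀ j ∈ S, t ≤ σ j := fun j hj =>
    Real.sqrt_le_sqrt (Finset.inf'_le μ hj)
  set s' : Fin m2 → ℝ := fun j => if μ j = 0 then 0 else t / σ j with hs'def
  set d : Fin m2 → ℝ := fun j => 1 - s' j with hddef
  set T : Matrix (Fin m1) (Fin m2) ℝ := Ahat * (V * diagonal s' * star V) with hTdef
  set A : Matrix (Fin m1) (Fin m2) ℝ := Ahat * (V * diagonal d * star V) with hAdef
  -- σ facts on S
  have hσpos : ∀ j ∈ S, 0 < σ j := fun j hj => Real.sqrt_pos.mpr
    (lt_of_le_of_ne (hμ0 j) (Ne.symm (Finset.mem_filter.mp hj).2))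
  have hμσ : ∀ j, μ j = σ j * σ j := fun j => (Real.mul_self_sqrt (hμ0 j)).symm
  -- A = Ahat - T
  have hVV : V * star V = 1 := (Matrix.mem_unitaryGroup_iff).mp hV
  have hAT : A = Ahat - T := by
    have hd : diagonal d = 1 - diagonal s' := by
      rw [hddef, ← Matrix.diagonal_one, ← diagonal_sub]
    have hW : V * diagonal d * star V = 1 - V * diagonal s' * star V := by
      rw [hd]
      simp only [Matrix.sub_mul, Matrix.mul_sub, Matrix.one_mul, Matrix.mul_one]
      rw [hVV]
    rw [hAdef, hW, Matrix.mul_sub, Matrix.mul_one, hTdef]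
  -- computations of conjTranspose products
  have hAhA : Aᴴ * A = V * diagonal (fun j => (d j * μ j) * d j) * star V := by
    rw [hAdef]; exact conj_sandwich Ahat hV μ d hspec
  have hThT : Tᴴ * T = V * diagonal (fun j => (s' j * μ j) * s' j) * star V := by
    rw [hTdef]; exact conj_sandwich Ahat hV μ s' hspec
  -- value computations
  have hc_sqrt : ∀ j, Real.sqrt ((d j * μ j) * d j) = if μ j = 0 then 0 else σ j - t := by
    intro j
    by_cases hj : μ j = 0
    · simp [hj]
    · have hjS : j ∈ S := Finset.mem_filter.mpr ⟨Finset.mem_univ _, hj⟩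
      have hσj : 0 < σ j := hσpos j hjS
      have hdj : d j = (σ j - t) / σ j := by
        rw [hddef]; simp only [hs'def, if_neg hj]
        field_simp
      have : (d j * μ j) * d j = (σ j - t) * (σ j - t) := by
        rw [hdj, hμσ j]; field_simp
      rw [this, if_neg hj, Real.sqrt_mul_self (by linarith [htle j hjS])]
  have he_val : ∀ j, (s' j * μ j) * s' j = if μ j = 0 then 0 else t * t := by
    intro j
    by_cases hj : μ j = 0
    · simp [hj]
    · have hjS : j ∈ S := Finset.mem_filter.mpr ⟨Finset.mem_univ _, hj⟩
      have hσj : 0 < σ j := hσpos j hjS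
      rw [if_neg hj]
      simp only [hs'def, if_neg hj]
      rw [hμσ j]; field_simp
  -- nuclear norms
  have hc_nonneg : ∀ j, 0 ≤ (d j * μ j) * d j := by
    intro j
    have : (d j * μ j) * d j = (d j)^2 * μ j := by ring
    rw [this]; exact mul_nonneg (sq_nonneg _) (hμ0 j)
  have hnucA : nuclearNorm A = nuclearNorm Ahat - (S.card : ℝ) * t := by
    have h1 : nuclearNorm A = ∑ j, Real.sqrt ((d j * μ j) * d j) :=
      nuclearNorm_eq_of_conj A hV _ hc_nonneg hAhA
    have h2 : nuclearNorm Ahat = ∑ j, σ j := rfl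
    rw [h1, h2]
    have h3 : ∑ j, Real.sqrt ((d j * μ j) * d j) = ∑ j ∈ S, (σ j - t) := by
      rw [Finset.sum_congr rfl (fun j _ => hc_sqrt j)]
      rw [← Finset.sum_filter_add_sum_filter_not Finset.univ (fun j => μ j ≠ 0)]
      have : ∀ j ∈ Finset.univ.filter (fun j => ¬ μ j ≠ 0), (if μ j = 0 then (0:ℝ) else σ j - t) = 0 := by
        intro j hj
        simp only [Finset.mem_filter, not_not] at hj
        simp [hj.2]
      rw [Finset.sum_eq_zero this, add_zero, ← hSdef]
      exact Finset.sum_congr rfl (fun j hj => by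
        simp [(Finset.mem_filter.mp hj).2])
    have h4 : ∑ j, σ j = ∑ j ∈ S, σ j := by
      symm
      apply Finset.sum_subset (Finset.subset_univ S)
      intro j _ hj
      simp only [hSdef, Finset.mem_filter, Finset.mem_univ, true_and, not_not] at hj
      simp [hσdef, hj]
    rw [h3, h4, Finset.sum_sub_distrib, Finset.sum_const, nsmul_eq_mul]
  -- frobenius norm of T
  have hfrobT : frobNorm T = t * Real.sqrt (S.card : ℝ) := by
    rw [frobNorm_eq_sqrt_trace, hThT, trace_conj hV]
    have : ∑ j, ((s' j * μ j) * s' j) = (S.card : ℝ) * (t * t) := by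
      rw [Finset.sum_congr rfl (fun j _ => he_val j)]
      rw [Finset.sum_ite, Finset.sum_const_zero, zero_add, Finset.sum_const, nsmul_eq_mul]
    rw [this]
    rw [Real.sqrt_mul (Nat.cast_nonneg _), Real.sqrt_mul_self ht.le]
    ring
  -- main inequality
  have hkey := hmin A
  have hfrA : frobNorm (A - X) ≤ frobNorm (Ahat - X) + frobNorm T := by
    have : A - X = (Ahat - X) - T := by rw [hAT]; abel
    rw [this]
    exact frobNorm_sub_le _ _
  have hineq : lam * ((S.card : ℝ) * t) ≤ t * Real.sqrt (S.card : ℝ) := by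
    rw [hnucA] at hkey
    nlinarith [hkey, hfrA, hfrobT]
  -- conclude
  have hR1 : (1:ℝ) ≤ (S.card : ℝ) := by
    norm_cast
    exact Finset.card_pos.mpr hS
  have hsqR : Real.sqrt (S.card : ℝ) * Real.sqrt (S.card : ℝ) = (S.card : ℝ) :=
    Real.mul_self_sqrt (Nat.cast_nonneg _)
  have hsqRpos : 0 < Real.sqrt (S.card : ℝ) := Real.sqrt_pos.mpr (by linarith)
  have h0 : lam * (S.card : ℝ) ≤ Real.sqrt (S.card : ℝ) := by
    have h' : (lam * (S.card : ℝ)) * t ≤ Real.sqrt (S.card : ℝ) * t := by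
      calc (lam * (S.card : ℝ)) * t = lam * ((S.card : ℝ) * t) := by ring
        _ ≤ t * Real.sqrt (S.card : ℝ) := hineq
        _ = Real.sqrt (S.card : ℝ) * t := by ring
    exact le_of_mul_le_mul_right h' ht
  have h2 : lam * Real.sqrt (S.card : ℝ) ≤ 1 := by
    have h' : (lam * Real.sqrt (S.card : ℝ)) * Real.sqrt (S.card : ℝ)
        ≤ 1 * Real.sqrt (S.card : ℝ) := by
      rw [mul_assoc, hsqR, one_mul]; exact h0
    exact le_of_mul_le_mul_right h' hsqRpos
  rw [hrank, le_div_iff₀ (by positivity)]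
  nlinarith [h2, hsqR, mul_nonneg hlam.le hsqRpos.le]
end

section
/- For any $m_1 \times m_2$ real matrices $A$ and $B$, with $\mathbf{P}_A(B) = B - P_{S_1^\perp(A)} B P_{S_2^\perp(A)}$ as above, the nuclear norm satisfies $\|\mathbf{P}_A(B)\|_1 \le \sqrt{2\,\mathrm{rank}(A)}\,\|B\|_2$, where $\|\cdot\|_2$ is the Frobenius norm. -/
open Matrix

/- ### Auxiliary lemmas -/

theorem myCT {p q : ℕ} (M : Matrix (Fin p) (Fin q) ℝ) : Mᴴ = Mᵀ := by
  ext i j; simp [Matrix.conjTranspose_apply]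

theorem myRankAddLe {m n : ℕ} (A B : Matrix (Fin m) (Fin n) ℝ) :
    (A + B).rank ≤ A.rank + B.rank := by
  unfold Matrix.rank
  have h : (A + B).mulVecLin = A.mulVecLin + B.mulVecLin := by
    ext v i; simp [Matrix.mulVecLin, Matrix.add_mulVec]
  rw [h]
  calc Module.finrank ℝ (LinearMap.range (A.mulVecLin + B.mulVecLin))
      ≤ Module.finrank ℝ (LinearMap.range A.mulVecLin ⊔ LinearMap.range B.mulVecLin :
          Submodule ℝ (Fin m → ℝ)) := by
        apply Submodule.finrank_mono
        intro x hx
        obtain ⟨v, rfl⟩ := hx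
        exact Submodule.add_mem_sup (LinearMap.mem_range_self _ v) (LinearMap.mem_range_self _ v)
    _ ≤ _ := Submodule.finrank_add_le_finrank_add_finrank _ _

theorem myTraceEig {n : ℕ} (M : Matrix (Fin n) (Fin n) ℝ) (hM : M.IsHermitian) :
    M.trace = ∑ i, hM.eigenvalues i := by
  conv_lhs => rw [hM.spectral_theorem]
  rw [Unitary.conjStarAlgAut_apply, Matrix.trace_mul_cycle]
  have h1 : (star (hM.eigenvectorUnitary : Matrix (Fin n) (Fin n) ℝ)) *
      (hM.eigenvectorUnitary : Matrix (Fin n) (Fin n) ℝ) = 1 :=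
    Matrix.mem_unitaryGroup_iff'.mp (hM.eigenvectorUnitary).2
  rw [h1, Matrix.one_mul, Matrix.trace_diagonal]
  simp

theorem myTraceFrob {m n : ℕ} (C : Matrix (Fin m) (Fin n) ℝ) :
    (Cᴴ * C).trace = ∑ i, ∑ j, (C i j) ^ 2 := by
  rw [Matrix.trace]
  rw [Finset.sum_comm]
  congr 1
  ext i
  simp [Matrix.diag, Matrix.mul_apply, Matrix.conjTranspose_apply, sq, mul_comm]

/-- Nuclear norm is at most `√rank` times Frobenius norm. -/
theorem myNucLeRank {m n : ℕ} (C : Matrix (Fin m) (Fin n) ℝ) (r : ℕ) (hr : C.rank ≤ r) :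
    nuclearNorm C ≤ Real.sqrt r * frobNorm C := by
  classical
  set hH := Matrix.isHermitian_conjTranspose_mul_self C with hHdef
  set lam := hH.eigenvalues with hlam
  have hnn : ∀ i, 0 ≤ lam i := Matrix.eigenvalues_conjTranspose_mul_self_nonneg C
  set S : Finset (Fin n) := Finset.univ.filter (fun i => lam i ≠ 0) with hS
  have hcard : S.card = (Cᴴ * C).rank := by
    rw [hH.rank_eq_card_non_zero_eigs, Fintype.card_subtype]
  have hrank : (Cᴴ * C).rank = C.rank := Matrix.rank_conjTranspose_mul_self C
  have h1 : nuclearNorm C = ∑ i ∈ S, Real.sqrt (lam i) := by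
    have h0 : nuclearNorm C = ∑ i, Real.sqrt (lam i) := rfl
    rw [h0]
    refine (Finset.sum_subset (Finset.subset_univ S) ?_).symm
    intro i _ hi
    have : lam i = 0 := by simpa [hS] using hi
    rw [this, Real.sqrt_zero]
  have hCS : (∑ i ∈ S, Real.sqrt (lam i)) ^ 2 ≤ (S.card : ℝ) * ∑ i ∈ S, lam i := by
    have h := Finset.sum_mul_sq_le_sq_mul_sq S (fun _ => (1 : ℝ)) (fun i => Real.sqrt (lam i))
    have h2 : ∀ i ∈ S, Real.sqrt (lam i) ^ 2 = lam i := fun i _ => Real.sq_sqrt (hnn i)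
    rw [Finset.sum_congr rfl h2] at h
    simpa using h
  have hsumS : ∑ i ∈ S, lam i ≤ ∑ i, lam i := by
    apply Finset.sum_le_sum_of_subset_of_nonneg (Finset.subset_univ S)
    intro i _ _; exact hnn i
  have hsum : ∑ i, lam i = ∑ i, ∑ j, (C i j) ^ 2 := by
    rw [← myTraceFrob, myTraceEig _ hH]
  have hfrob : frobNorm C = Real.sqrt (∑ i, lam i) := by
    rw [frobNorm, hsum]
  have hnuc_nonneg : 0 ≤ nuclearNorm C := by
    rw [h1]; exact Finset.sum_nonneg fun i _ => Real.sqrt_nonneg _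
  have key : (nuclearNorm C) ^ 2 ≤ (r : ℝ) * ∑ i, lam i := by
    rw [h1]
    calc (∑ i ∈ S, Real.sqrt (lam i)) ^ 2 ≤ (S.card : ℝ) * ∑ i ∈ S, lam i := hCS
      _ ≤ (r : ℝ) * ∑ i, lam i := by
          apply mul_le_mul
          · exact_mod_cast (hcard.trans hrank).trans_le hr
          · exact hsumS
          · exact Finset.sum_nonneg fun i _ => hnn i
          · positivity
  have hkey := Real.sqrt_le_sqrt key
  rw [Real.sqrt_sq hnuc_nonneg] at hkey
  calc nuclearNorm C ≤ Real.sqrt ((r : ℝ) * ∑ i, lam i) := hkey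
    _ = Real.sqrt r * Real.sqrt (∑ i, lam i) := Real.sqrt_mul (by positivity) _
    _ = Real.sqrt r * frobNorm C := by rw [hfrob]

/-- $‖\mathbf P_A(B)‖_1 ≤ \sqrt{2\,\mathrm{rank}(A)}\,‖B‖_2$. -/
theorem stmt2 {m1 m2 : ℕ} (A B : Matrix (Fin m1) (Fin m2) ℝ)
    (P1 : Matrix (Fin m1) (Fin m1) ℝ) (P2 : Matrix (Fin m2) (Fin m2) ℝ)
    (hP1 : IsProjPerpCol A P1) (hP2 : IsProjPerpCol Aᵀ P2) :
    nuclearNorm (B - P1 * B * P2) ≤ Real.sqrt (2 * A.rank) * frobNorm B := by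
  obtain ⟨⟨hP1s, hP1i⟩, hP1A, hP1r⟩ := hP1
  obtain ⟨⟨hP2s, hP2i⟩, hP2A, hP2r⟩ := hP2
  set C := B - P1 * B * P2 with hC
  set Q := P1 * B * P2 with hQ
  -- rank bound
  have hrankA1 : A.rank ≤ m1 := le_trans (Matrix.rank_le_card_height A) (by simp)
  have hrankAT2 : Aᵀ.rank ≤ m2 := le_trans (Matrix.rank_le_card_height Aᵀ) (by simp)
  have hAT : Aᵀ.rank = A.rank := Matrix.rank_transpose A
  have h1P1 : ((1 : Matrix (Fin m1) (Fin m1) ℝ) - P1).rank ≤ A.rank := by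
    have hmul : P1 * ((1 : Matrix (Fin m1) (Fin m1) ℝ) - P1) = 0 := by
      rw [Matrix.mul_sub, Matrix.mul_one, hP1i, sub_self]
    have := Matrix.rank_add_rank_le_card_of_mul_eq_zero hmul
    simp only [Fintype.card_fin] at this
    omega
  have h1P2 : ((1 : Matrix (Fin m2) (Fin m2) ℝ) - P2).rank ≤ A.rank := by
    have hmul : P2 * ((1 : Matrix (Fin m2) (Fin m2) ℝ) - P2) = 0 := by
      rw [Matrix.mul_sub, Matrix.mul_one, hP2i, sub_self]
    have := Matrix.rank_add_rank_le_card_of_mul_eq_zero hmul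
    simp only [Fintype.card_fin] at this
    omega
  have hCsplit : C = ((1 : Matrix (Fin m1) (Fin m1) ℝ) - P1) * B
      + P1 * B * ((1 : Matrix (Fin m2) (Fin m2) ℝ) - P2) := by
    rw [hC, Matrix.sub_mul, Matrix.one_mul, Matrix.mul_sub, Matrix.mul_one]
    abel
  have hrankC : C.rank ≤ 2 * A.rank := by
    calc C.rank ≤ (((1 : Matrix (Fin m1) (Fin m1) ℝ) - P1) * B).rank
          + (P1 * B * ((1 : Matrix (Fin m2) (Fin m2) ℝ) - P2)).rank := by
          rw [hCsplit]; exact myRankAddLe _ _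
      _ ≤ ((1 : Matrix (Fin m1) (Fin m1) ℝ) - P1).rank
          + ((1 : Matrix (Fin m2) (Fin m2) ℝ) - P2).rank :=
          add_le_add (Matrix.rank_mul_le_left _ _) (Matrix.rank_mul_le_right _ _)
      _ ≤ 2 * A.rank := by omega
  -- Frobenius bound
  have hP1H : P1ᴴ = P1 := by rw [myCT]; exact hP1s
  have hP2H : P2ᴴ = P2 := by rw [myCT]; exact hP2s
  have hQH : Qᴴ = P2 * (Bᴴ * P1) := by
    rw [hQ]
    simp only [Matrix.conjTranspose_mul, hP1H, hP2H, Matrix.mul_assoc]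
  have e2 : (Qᴴ * Q).trace = (Bᴴ * Q).trace := by
    rw [hQH, hQ]
    simp only [Matrix.mul_assoc]
    rw [← Matrix.mul_assoc P1 P1 (B * P2), hP1i]
    rw [Matrix.trace_mul_comm P2 (Bᴴ * (P1 * (B * P2)))]
    simp only [Matrix.mul_assoc]
    rw [hP2i]
  have e1 : (Qᴴ * B).trace = (Bᴴ * Q).trace := by
    rw [← Matrix.trace_transpose (Qᴴ * B), Matrix.transpose_mul]
    rw [← myCT, ← myCT, Matrix.conjTranspose_conjTranspose]
  have expand : Cᴴ * C = Bᴴ * B - Bᴴ * Q - Qᴴ * B + Qᴴ * Q := by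
    have : C = B - Q := hC
    rw [this]
    simp only [Matrix.conjTranspose_sub, Matrix.sub_mul, Matrix.mul_sub]
    abel
  have hQQnn : 0 ≤ (Qᴴ * Q).trace := by
    rw [myTraceFrob]; positivity
  have hBQnn : 0 ≤ (Bᴴ * Q).trace := e2 ▸ hQQnn
  have hsq : ∑ i, ∑ j, (C i j) ^ 2 ≤ ∑ i, ∑ j, (B i j) ^ 2 := by
    rw [← myTraceFrob, ← myTraceFrob, expand, Matrix.trace_add, Matrix.trace_sub,
      Matrix.trace_sub, e1, e2]
    linarith
  have hfrobC : frobNorm C ≤ frobNorm B := Real.sqrt_le_sqrt hsq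
  -- combine
  have hmain := myNucLeRank C (2 * A.rank) hrankC
  have hcast : (Real.sqrt ((2 * A.rank : ℕ) : ℝ)) = Real.sqrt (2 * (A.rank : ℝ)) := by
    push_cast; ring_nf
  calc nuclearNorm C ≤ Real.sqrt ((2 * A.rank : ℕ) : ℝ) * frobNorm C := hmain
    _ = Real.sqrt (2 * (A.rank : ℝ)) * frobNorm C := by rw [hcast]
    _ ≤ Real.sqrt (2 * (A.rank : ℝ)) * frobNorm B :=
        mul_le_mul_of_nonneg_left hfrobC (Real.sqrt_nonneg _)
end

section
/- Let $A_0, X \in \mathbb{R}^{m_1 \times m_2}$ with $A_0 \ne X$, let $\rho < 1$, and let $\lambda$ satisfy $\rho/\sqrt{\mathrm{rank}(A_0)} \ge \lambda \ge 3 \|X - A_0\|_\infty / \|X - A_0\|_2$. Let $\hat A$ minimize $A \mapsto \|A - X\|_2 + \lambda \|A\|_1$. Then $\|\hat A - X\|_2 \ge \frac{3 - \sqrt{1+\rho^2}}{3 + \sqrt{1+\rho^2}} \|A_0 - X\|_2$. -/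
open Matrix

namespace SR
open Finset
variable {m n : ℕ}

def mip (A B : Matrix (Fin m) (Fin n) ℝ) : ℝ := ∑ i, ∑ j, A i j * B i j

lemma mip_self_nonneg (A : Matrix (Fin m) (Fin n) ℝ) : 0 ≤ mip A A := by
  apply Finset.sum_nonneg; intro i _; apply Finset.sum_nonneg; intro j _; exact mul_self_nonneg _

lemma mip_self_eq (A : Matrix (Fin m) (Fin n) ℝ) : mip A A = ∑ i, ∑ j, (A i j)^2 := by
  simp [mip, pow_two]

lemma frob_eq (A : Matrix (Fin m) (Fin n) ℝ) : frobNorm A = Real.sqrt (mip A A) := by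
  rw [mip_self_eq, frobNorm]

lemma frob_nonneg (A : Matrix (Fin m) (Fin n) ℝ) : 0 ≤ frobNorm A := Real.sqrt_nonneg _

lemma frob_sq (A : Matrix (Fin m) (Fin n) ℝ) : frobNorm A ^ 2 = mip A A := by
  rw [frob_eq, Real.sq_sqrt (mip_self_nonneg A)]

lemma mip_comm (A B : Matrix (Fin m) (Fin n) ℝ) : mip A B = mip B A := by
  simp [mip, mul_comm]

lemma mip_add_right (A B C : Matrix (Fin m) (Fin n) ℝ) :
    mip A (B + C) = mip A B + mip A C := by
  simp [mip, Matrix.add_apply, mul_add, Finset.sum_add_distrib]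

lemma mip_smul_right (t : ℝ) (A B : Matrix (Fin m) (Fin n) ℝ) :
    mip A (t • B) = t * mip A B := by
  simp [mip, Matrix.smul_apply, Finset.mul_sum, smul_eq_mul]; ring_nf
  apply Finset.sum_congr rfl; intro i _; apply Finset.sum_congr rfl; intro j _; ring

lemma mip_cs (A B : Matrix (Fin m) (Fin n) ℝ) : mip A B ≤ frobNorm A * frobNorm B := by
  have h := Real.sum_mul_le_sqrt_mul_sqrt (Finset.univ : Finset (Fin m × Fin n))
    (fun p => A p.1 p.2) (fun p => B p.1 p.2)
  simpa [mip, frobNorm, Fintype.sum_prod_type] using h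

lemma frob_triangle (A B : Matrix (Fin m) (Fin n) ℝ) :
    frobNorm (A + B) ≤ frobNorm A + frobNorm B := by
  have h1 : frobNorm (A + B) ^ 2 ≤ (frobNorm A + frobNorm B) ^ 2 := by
    rw [frob_sq]
    have : mip (A+B) (A+B) = mip A A + 2 * mip A B + mip B B := by
      rw [mip_add_right,
        show mip (A+B) A = mip A A + mip A B from by rw [mip_comm, mip_add_right, mip_comm A B],
        show mip (A+B) B = mip A B + mip B B from by rw [mip_comm, mip_add_right, mip_comm B A, mip_comm B B]]
      ring
    rw [this]
    have hcs := mip_cs A B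
    have := frob_sq A; have := frob_sq B
    nlinarith [frob_nonneg A, frob_nonneg B]
  have h2 : 0 ≤ frobNorm A + frobNorm B := add_nonneg (frob_nonneg A) (frob_nonneg B)
  nlinarith [frob_nonneg (A+B)]

lemma frob_neg (A : Matrix (Fin m) (Fin n) ℝ) : frobNorm (-A) = frobNorm A := by
  simp [frobNorm]

lemma frob_smul (t : ℝ) (A : Matrix (Fin m) (Fin n) ℝ) :
    frobNorm (t • A) = |t| * frobNorm A := by
  simp only [frobNorm, Matrix.smul_apply, smul_eq_mul, mul_pow]
  rw [show (∑ i, ∑ j, t^2 * A i j ^2) = t^2 * ∑ i, ∑ j, A i j ^2 by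
    rw [Finset.mul_sum]; apply Finset.sum_congr rfl; intros; rw [Finset.mul_sum]]
  rw [Real.sqrt_mul (sq_nonneg t), Real.sqrt_sq_eq_abs]

lemma frob_pos {A : Matrix (Fin m) (Fin n) ℝ} (hA : A ≠ 0) : 0 < frobNorm A := by
  rw [frobNorm]
  apply Real.sqrt_pos.mpr
  rcases lt_or_eq_of_le (Finset.sum_nonneg fun i _ => Finset.sum_nonneg fun j _ => sq_nonneg (A i j)) with h | h
  · exact h
  · exfalso; apply hA
    ext i j
    have h0 := (Finset.sum_eq_zero_iff_of_nonneg (fun i _ => Finset.sum_nonneg fun j _ => sq_nonneg (A i j))).mp h.symm i (Finset.mem_univ i)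
    have := (Finset.sum_eq_zero_iff_of_nonneg (fun j _ => sq_nonneg (A i j))).mp h0 j (Finset.mem_univ j)
    exact pow_eq_zero_iff (by norm_num) |>.mp this

lemma mip_eq_trace (A B : Matrix (Fin m) (Fin n) ℝ) : mip A B = Matrix.trace (Aᵀ * B) := by
  simp [mip, Matrix.trace, Matrix.diag, Matrix.mul_apply, Matrix.transpose_apply]
  rw [Finset.sum_comm]

def opSet (M : Matrix (Fin m) (Fin n) ℝ) : Set ℝ :=
  {c | ∃ v : Fin n → ℝ, ∑ i, (v i) ^ 2 = 1 ∧ c = Real.sqrt (∑ i, (M.mulVec v i) ^ 2)}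

lemma opNorm_eq (M : Matrix (Fin m) (Fin n) ℝ) : opNorm M = sSup (opSet M) := rfl

lemma opSet_bdd (M : Matrix (Fin m) (Fin n) ℝ) :
    BddAbove (opSet M) := by
  refine ⟨Real.sqrt (∑ i, ∑ j, (M i j)^2), ?_⟩
  rintro c ⟨v, hv, rfl⟩
  apply Real.sqrt_le_sqrt
  apply Finset.sum_le_sum
  intro i _
  calc (M.mulVec v i)^2 = (∑ j, M i j * v j)^2 := by rfl
    _ ≤ (∑ j, (M i j)^2) * ∑ j, (v j)^2 := Finset.sum_mul_sq_le_sq_mul_sq _ _ _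
    _ = ∑ j, (M i j)^2 := by rw [hv, mul_one]

lemma le_opNorm (M : Matrix (Fin m) (Fin n) ℝ) (v : Fin n → ℝ) (hv : ∑ i, (v i)^2 = 1) :
    Real.sqrt (∑ i, (M.mulVec v i) ^ 2) ≤ opNorm M :=
  le_csSup (opSet_bdd M) ⟨v, hv, rfl⟩

lemma opNorm_neg (M : Matrix (Fin m) (Fin n) ℝ) : opNorm (-M) = opNorm M := by
  rw [opNorm_eq, opNorm_eq]
  congr 1
  ext c
  constructor
  · rintro ⟨v, hv, rfl⟩; exact ⟨v, hv, by simp [Matrix.neg_mulVec]⟩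
  · rintro ⟨v, hv, rfl⟩; exact ⟨v, hv, by simp [Matrix.neg_mulVec]⟩

lemma opNorm_pos {M : Matrix (Fin m) (Fin n) ℝ} (hM : M ≠ 0) : 0 < opNorm M := by
  have : ∃ i j, M i j ≠ 0 := by
    by_contra h
    push_neg at h
    exact hM (by ext i j; exact h i j)
  obtain ⟨i0, j0, hij⟩ := this
  have h1 : ∑ i, ((Pi.single j0 1 : Fin n → ℝ) i)^2 = 1 := by
    simp [Pi.single_apply, sq]
  have h2 : Real.sqrt (∑ i, (M.mulVec (Pi.single j0 1) i) ^ 2) ≤ opNorm M :=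
    le_opNorm M _ h1
  refine lt_of_lt_of_le ?_ h2
  apply Real.sqrt_pos.mpr
  have h3 : (M.mulVec (Pi.single j0 1) i0)^2 > 0 := by
    rw [Matrix.mulVec_single]
    simpa using pow_pos (abs_pos.mpr hij) 2 |>.trans_le (by rw [← sq_abs]; simp)
  calc (0:ℝ) < (M.mulVec (Pi.single j0 1) i0)^2 := h3
    _ ≤ ∑ i, (M.mulVec (Pi.single j0 1) i) ^ 2 :=
        Finset.single_le_sum (f := fun i => (M.mulVec (Pi.single j0 1) i)^2)
          (fun i _ => sq_nonneg _) (Finset.mem_univ i0)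

lemma trace_conj_diag {k : ℕ} (W : Matrix (Fin k) (Fin k) ℝ) (hW : Wᵀ * W = 1) (f : Fin k → ℝ) :
    Matrix.trace (W * Matrix.diagonal f * Wᵀ) = ∑ i, f i := by
  rw [Matrix.trace_mul_comm, ← mul_assoc, hW, one_mul, Matrix.trace_diagonal]

open scoped MatrixOrder in
lemma nuclearNorm_eq_of_diag {N : Matrix (Fin m) (Fin n) ℝ} {V : Matrix (Fin n) (Fin n) ℝ}
    (hV' : Vᵀ * V = 1) {g : Fin n → ℝ} (hg : ∀ i, 0 ≤ g i)
    (h : Nᵀ * N = V * Matrix.diagonal g * Vᵀ) :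
    nuclearNorm N = ∑ i, Real.sqrt (g i) := by
  have hP : Matrix.PosSemidef (Nᴴ * N) := Matrix.posSemidef_conjTranspose_mul_self N
  set S : Matrix (Fin n) (Fin n) ℝ := V * Matrix.diagonal (fun i => Real.sqrt (g i)) * Vᵀ with hSdef
  have hS : Matrix.PosSemidef S := by
    have : Matrix.PosSemidef (Matrix.diagonal (fun i => Real.sqrt (g i))) :=
      Matrix.posSemidef_diagonal_iff.mpr fun i => Real.sqrt_nonneg _
    exact this.mul_mul_conjTranspose_same V
  have hSS : S * S = V * Matrix.diagonal g * Vᵀ := by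
    rw [hSdef]
    calc (V * Matrix.diagonal (fun i => Real.sqrt (g i)) * Vᵀ) *
          (V * Matrix.diagonal (fun i => Real.sqrt (g i)) * Vᵀ)
        = V * (Matrix.diagonal (fun i => Real.sqrt (g i)) * ((Vᵀ * V) *
          (Matrix.diagonal (fun i => Real.sqrt (g i)) * Vᵀ))) := by
          simp only [mul_assoc]
      _ = V * (Matrix.diagonal (fun i => Real.sqrt (g i)) *
          Matrix.diagonal (fun i => Real.sqrt (g i))) * Vᵀ := by
          rw [hV', one_mul]; simp only [mul_assoc]
      _ = V * Matrix.diagonal g * Vᵀ := by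
          rw [Matrix.diagonal_mul_diagonal,
            show (fun i => Real.sqrt (g i) * Real.sqrt (g i)) = g from
              funext fun i => Real.mul_self_sqrt (hg i)]
  have hS2 : S ^ 2 = Nᴴ * N := by
    rw [pow_two, hSS, ← h]; rfl
  have hSsqrt : S = CFC.sqrt (Nᴴ * N) := by
    exact ((CFC.sqrt_eq_iff _ _ hP.nonneg hS.nonneg).mpr (by rw [← hS2, pow_two])).symm
  have h1 : Matrix.trace (CFC.sqrt (Nᴴ * N)) = ∑ i, Real.sqrt (hP.1.eigenvalues i) := by
    calc Matrix.trace (CFC.sqrt (Nᴴ * N))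
        = Matrix.trace ((hP.1.eigenvectorUnitary : Matrix (Fin n) (Fin n) ℝ) *
            Matrix.diagonal (fun i => Real.sqrt (hP.1.eigenvalues i)) *
            (hP.1.eigenvectorUnitary : Matrix (Fin n) (Fin n) ℝ)ᵀ) := by
          rw [CFC.sqrt_eq_cfc, cfc_nnreal_eq_real _ (Nᴴ * N), hP.1.cfc_eq]
          simp [Matrix.IsHermitian.cfc, Function.comp_def, Matrix.star_eq_conjTranspose,
            Real.coe_toNNReal _ (hP.eigenvalues_nonneg _)]
          refine congrArg Matrix.trace (congrArg (· * _) (congrArg (_ * ·)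
            (congrArg Matrix.diagonal (funext fun i => ?_))))
          exact congrArg Real.sqrt (max_eq_left (hP.eigenvalues_nonneg i))
      _ = ∑ i, Real.sqrt (hP.1.eigenvalues i) :=
          trace_conj_diag _ (Matrix.mem_unitaryGroup_iff'.mp hP.1.eigenvectorUnitary.2) _
  have h0 : nuclearNorm N = ∑ i, Real.sqrt (hP.1.eigenvalues i) := rfl
  have h2 : Matrix.trace S = ∑ i, Real.sqrt (g i) := trace_conj_diag V hV' _
  rw [h0, ← h1, ← hSsqrt, h2]

section spec
variable (N : Matrix (Fin m) (Fin n) ℝ)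

noncomputable def evals : Fin n → ℝ := (Matrix.isHermitian_conjTranspose_mul_self N).eigenvalues
noncomputable def evU : Matrix (Fin n) (Fin n) ℝ :=
  ((Matrix.isHermitian_conjTranspose_mul_self N).eigenvectorUnitary : Matrix (Fin n) (Fin n) ℝ)

lemma evU_orth : (evU N)ᵀ * evU N = 1 :=
  Matrix.mem_unitaryGroup_iff'.mp (Matrix.isHermitian_conjTranspose_mul_self N).eigenvectorUnitary.2

lemma evU_orth' : evU N * (evU N)ᵀ = 1 :=
  Matrix.mem_unitaryGroup_iff.mp (Matrix.isHermitian_conjTranspose_mul_self N).eigenvectorUnitary.2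

lemma evals_nonneg (i : Fin n) : 0 ≤ evals N i :=
  (Matrix.posSemidef_conjTranspose_mul_self N).eigenvalues_nonneg i

lemma spec : Nᵀ * N = evU N * Matrix.diagonal (evals N) * (evU N)ᵀ :=
  (Matrix.isHermitian_conjTranspose_mul_self N).spectral_theorem

lemma gram : (N * evU N)ᵀ * (N * evU N) = Matrix.diagonal (evals N) := by
  rw [Matrix.transpose_mul]
  calc (evU N)ᵀ * Nᵀ * (N * evU N) = (evU N)ᵀ * (Nᵀ * N) * evU N := by
        simp only [Matrix.mul_assoc]
    _ = (evU N)ᵀ * (evU N * Matrix.diagonal (evals N) * (evU N)ᵀ) * evU N := by rw [← spec]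
    _ = ((evU N)ᵀ * evU N) * Matrix.diagonal (evals N) * ((evU N)ᵀ * evU N) := by
        simp only [mul_assoc]
    _ = Matrix.diagonal (evals N) := by rw [evU_orth]; simp

lemma sum_evals : ∑ i, evals N i = mip N N := by
  rw [mip_eq_trace, spec N, trace_conj_diag _ (evU_orth N)]

lemma nuclear_eq : nuclearNorm N = ∑ i, Real.sqrt (evals N i) :=
  nuclearNorm_eq_of_diag (evU_orth N) (evals_nonneg N) (spec N)

lemma rank_eq_card : N.rank = Fintype.card {i // evals N i ≠ 0} := by
  rw [← Matrix.rank_conjTranspose_mul_self]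
  exact (Matrix.isHermitian_conjTranspose_mul_self N).rank_eq_card_non_zero_eigs

lemma col_unit (j : Fin n) : ∑ k, ((evU N) k j)^2 = 1 := by
  have h := congrArg (fun X => X j j) (evU_orth N)
  simp only [Matrix.mul_apply, Matrix.transpose_apply, Matrix.one_apply_eq] at h
  calc ∑ k, ((evU N) k j)^2 = ∑ k, (evU N) k j * (evU N) k j := by
        apply Finset.sum_congr rfl; intros; rw [pow_two]
    _ = 1 := h

lemma col_gram (j : Fin n) : ∑ i, ((N * evU N) i j)^2 = evals N j := by
  have h := congrArg (fun X => X j j) (gram N)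
  simp only [Matrix.mul_apply, Matrix.transpose_apply, Matrix.diagonal_apply_eq] at h
  calc ∑ i, ((N * evU N) i j)^2 = ∑ i, (N * evU N) i j * (N * evU N) i j := by
        apply Finset.sum_congr rfl; intros; rw [pow_two]
    _ = evals N j := h

end spec


lemma mip_le_op_mul_nuclear (M N : Matrix (Fin m) (Fin n) ℝ) :
    mip M N ≤ opNorm M * nuclearNorm N := by
  have key : mip M N = mip (M * evU N) (N * evU N) := by
    rw [mip_eq_trace, mip_eq_trace, Matrix.transpose_mul]
    calc Matrix.trace (Mᵀ * N)
        = Matrix.trace ((Mᵀ * N * evU N) * (evU N)ᵀ) := by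
          rw [Matrix.mul_assoc, evU_orth', Matrix.mul_one]
      _ = Matrix.trace ((evU N)ᵀ * (Mᵀ * N * evU N)) := Matrix.trace_mul_comm _ _
      _ = Matrix.trace ((evU N)ᵀ * Mᵀ * (N * evU N)) := by simp only [Matrix.mul_assoc]
  rw [key, nuclear_eq, Finset.mul_sum]
  rw [show mip (M * evU N) (N * evU N) =
    ∑ j, ∑ i, (M * evU N) i j * (N * evU N) i j from Finset.sum_comm]
  apply Finset.sum_le_sum
  intro j _
  calc ∑ i, (M * evU N) i j * (N * evU N) i j
      ≤ Real.sqrt (∑ i, ((M * evU N) i j)^2) * Real.sqrt (∑ i, ((N * evU N) i j)^2) :=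
        Real.sum_mul_le_sqrt_mul_sqrt _ _ _
    _ = Real.sqrt (∑ i, ((M * evU N) i j)^2) * Real.sqrt (evals N j) := by rw [col_gram]
    _ ≤ opNorm M * Real.sqrt (evals N j) := by
        apply mul_le_mul_of_nonneg_right _ (Real.sqrt_nonneg _)
        have h1 : ∑ i, ((M * evU N) i j)^2 = ∑ i, (M.mulVec (fun k => (evU N) k j) i)^2 := by
          apply Finset.sum_congr rfl; intros i _
          congr 1
        exact h1 ▸ le_opNorm M _ (col_unit N j)

lemma nuclear_le_sqrt_rank_mul_frob (N : Matrix (Fin m) (Fin n) ℝ) :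
    nuclearNorm N ≤ Real.sqrt (N.rank : ℝ) * frobNorm N := by
  classical
  rw [nuclear_eq]
  set f : Fin n → ℝ := fun i => if evals N i ≠ 0 then 1 else 0 with hf
  have hstep : ∀ i, Real.sqrt (evals N i) = Real.sqrt (f i) * Real.sqrt (evals N i) := by
    intro i
    by_cases h : evals N i ≠ 0
    · simp [hf, h]
    · push_neg at h; simp [hf, h]
  calc ∑ i, Real.sqrt (evals N i) = ∑ i, Real.sqrt (f i) * Real.sqrt (evals N i) := by
        apply Finset.sum_congr rfl; intros i _; exact hstep i
    _ ≤ Real.sqrt (∑ i, f i) * Real.sqrt (∑ i, evals N i) :=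
        Real.sum_sqrt_mul_sqrt_le _ (fun i => by simp only [hf]; split <;> norm_num)
          (evals_nonneg N)
    _ = Real.sqrt (N.rank : ℝ) * frobNorm N := by
        congr 1
        · congr 1
          rw [Finset.sum_boole]
          rw [rank_eq_card, Fintype.card_subtype]
        · rw [frob_eq, sum_evals]

lemma rank_sub_le (A B : Matrix (Fin m) (Fin n) ℝ) : (A - B).rank ≤ A.rank + B.rank := by
  unfold Matrix.rank
  have hle : LinearMap.range (A - B).mulVecLin ≤
      LinearMap.range A.mulVecLin ⊔ LinearMap.range B.mulVecLin := by
    rintro x ⟨v, rfl⟩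
    have : (A - B).mulVecLin v = A.mulVecLin v - B.mulVecLin v := by
      simp [Matrix.sub_mulVec]
    rw [this]
    exact Submodule.sub_mem _ (Submodule.mem_sup_left ⟨v, rfl⟩) (Submodule.mem_sup_right ⟨v, rfl⟩)
  calc Module.finrank ℝ (LinearMap.range (A - B).mulVecLin)
      ≤ Module.finrank ℝ ↥(LinearMap.range A.mulVecLin ⊔ LinearMap.range B.mulVecLin) :=
        Submodule.finrank_mono hle
    _ ≤ _ := Submodule.finrank_add_le_finrank_add_finrank _ _
set_option maxHeartbeats 1000000 in
lemma rank_bound {lam : ℝ} (hlam : 0 < lam) (X Ahat : Matrix (Fin m) (Fin n) ℝ)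
    (hmin : ∀ A : Matrix (Fin m) (Fin n) ℝ,
      frobNorm (Ahat - X) + lam * nuclearNorm Ahat ≤ frobNorm (A - X) + lam * nuclearNorm A) :
    lam ^ 2 * (Ahat.rank : ℝ) ≤ 1 := by
  classical
  set g : Fin n → ℝ := evals Ahat with hg
  set U : Matrix (Fin n) (Fin n) ℝ := evU Ahat with hU
  set T : Finset (Fin n) := Finset.univ.filter (fun i => g i ≠ 0) with hT
  have hrank : Ahat.rank = T.card := by
    rw [rank_eq_card, Fintype.card_subtype]
  rcases T.eq_empty_or_nonempty with hTe | hTne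
  · rw [hrank, hTe]
    simp
  obtain ⟨i0, hi0T, hi0min⟩ := T.exists_min_image (fun i => Real.sqrt (g i)) hTne
  set t : ℝ := Real.sqrt (g i0) with htdef
  have hgi0 : g i0 ≠ 0 := (Finset.mem_filter.mp hi0T).2
  have ht : 0 < t := Real.sqrt_pos.mpr (lt_of_le_of_ne (evals_nonneg _ i0) (Ne.symm hgi0))
  set h' : Fin n → ℝ := fun i => if i ∈ T then t / Real.sqrt (g i) else 0 with hh'
  set E : Matrix (Fin m) (Fin n) ℝ := Ahat * U with hE
  set W : Matrix (Fin m) (Fin n) ℝ := E * Matrix.diagonal h' * Uᵀ with hW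
  set c : ℝ := (T.card : ℝ) with hc
  have hc1 : 1 ≤ c := by
    rw [hc]
    exact_mod_cast Finset.card_pos.mpr hTne
  have hc0 : 0 < c := lt_of_lt_of_le one_pos hc1
  have hAhat : Ahat = E * Uᵀ := by
    rw [hE, Matrix.mul_assoc, evU_orth', Matrix.mul_one]
  have hEE : Eᵀ * E = Matrix.diagonal g := gram Ahat
  -- sqrt facts on T
  have hsq : ∀ i ∈ T, Real.sqrt (g i) ≠ 0 := by
    intro i hi
    have : 0 < g i := lt_of_le_of_ne (evals_nonneg Ahat i) (Ne.symm (Finset.mem_filter.mp hi).2)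
    exact ne_of_gt (Real.sqrt_pos.mpr this)
  -- Frobenius norm of W
  have hWW : mip W W = t^2 * c := by
    have hWt : Wᵀ = U * Matrix.diagonal h' * Eᵀ := by
      rw [hW]
      simp [Matrix.transpose_mul, Matrix.diagonal_transpose, Matrix.mul_assoc]
    have : Wᵀ * W = U * Matrix.diagonal (fun i => h' i * g i * h' i) * Uᵀ := by
      rw [hWt, hW]
      calc U * Matrix.diagonal h' * Eᵀ * (E * Matrix.diagonal h' * Uᵀ)
          = U * (Matrix.diagonal h' * (Eᵀ * E) * Matrix.diagonal h') * Uᵀ := by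
            simp only [Matrix.mul_assoc]
        _ = U * (Matrix.diagonal h' * Matrix.diagonal g * Matrix.diagonal h') * Uᵀ := by
            rw [hEE]
        _ = U * Matrix.diagonal (fun i => h' i * g i * h' i) * Uᵀ := by
            rw [Matrix.diagonal_mul_diagonal, Matrix.diagonal_mul_diagonal]
    rw [mip_eq_trace, this, trace_conj_diag _ (evU_orth Ahat)]
    have : ∀ i, h' i * g i * h' i = if i ∈ T then t^2 else 0 := by
      intro i
      by_cases hi : i ∈ T
      · simp only [hh', if_pos hi]
        have h1 : Real.sqrt (g i) * Real.sqrt (g i) = g i :=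
          Real.mul_self_sqrt (evals_nonneg Ahat i)
        have hs : Real.sqrt (g i) ≠ 0 := hsq i hi
        rw [show t / Real.sqrt (g i) * g i * (t / Real.sqrt (g i)) =
          t^2 * (g i / (Real.sqrt (g i) * Real.sqrt (g i))) from by ring, h1,
          div_self (Finset.mem_filter.mp hi).2, mul_one]
      · simp [hh', if_neg hi]
    rw [Finset.sum_congr rfl (fun i _ => this i)]
    rw [Finset.sum_ite_mem, Finset.univ_inter, Finset.sum_const, nsmul_eq_mul, ← hc]
    ring
  have hfrobW : frobNorm W = t * Real.sqrt c := by
    rw [frob_eq, hWW, Real.sqrt_mul (sq_nonneg t), Real.sqrt_sq ht.le]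
  -- nuclear norm of Ahat - W
  have hAt : Ahat - W = E * Matrix.diagonal (fun i => 1 - h' i) * Uᵀ := by
    have hdiag : Matrix.diagonal (fun i => 1 - h' i) = 1 - Matrix.diagonal h' := by
      ext i j
      by_cases hij : i = j
      · subst hij; simp
      · simp [Matrix.diagonal_apply_ne _ hij, Matrix.one_apply_ne hij]
    rw [hdiag, Matrix.mul_sub, Matrix.mul_one, Matrix.sub_mul, ← hAhat, hW]
  have hnucAt : nuclearNorm (Ahat - W) = nuclearNorm Ahat - t * c := by
    have hq : (Ahat - W)ᵀ * (Ahat - W) =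
        U * Matrix.diagonal (fun i => (1 - h' i) * g i * (1 - h' i)) * Uᵀ := by
      rw [hAt]
      have hAtT : (E * Matrix.diagonal (fun i => 1 - h' i) * Uᵀ)ᵀ =
          U * Matrix.diagonal (fun i => 1 - h' i) * Eᵀ := by
        simp [Matrix.transpose_mul, Matrix.diagonal_transpose, Matrix.mul_assoc]
      rw [hAtT]
      calc U * Matrix.diagonal (fun i => 1 - h' i) * Eᵀ *
            (E * Matrix.diagonal (fun i => 1 - h' i) * Uᵀ)
          = U * (Matrix.diagonal (fun i => 1 - h' i) * (Eᵀ * E) *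
              Matrix.diagonal (fun i => 1 - h' i)) * Uᵀ := by
            simp only [Matrix.mul_assoc]
        _ = U * Matrix.diagonal (fun i => (1 - h' i) * g i * (1 - h' i)) * Uᵀ := by
            rw [hEE, Matrix.diagonal_mul_diagonal, Matrix.diagonal_mul_diagonal]
    have hqnn : ∀ i, 0 ≤ (1 - h' i) * g i * (1 - h' i) := by
      intro i
      have := mul_nonneg (sq_nonneg (1 - h' i)) (evals_nonneg Ahat i)
      nlinarith
    rw [nuclearNorm_eq_of_diag (evU_orth Ahat) hqnn hq]
    have hterm : ∀ i, Real.sqrt ((1 - h' i) * g i * (1 - h' i)) =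
        Real.sqrt (g i) - (if i ∈ T then t else 0) := by
      intro i
      rw [show (1 - h' i) * g i * (1 - h' i) = (1 - h' i)^2 * g i from by ring]
      by_cases hi : i ∈ T
      · have hs : Real.sqrt (g i) ≠ 0 := hsq i hi
        have hs0 : 0 < Real.sqrt (g i) :=
          lt_of_le_of_ne (Real.sqrt_nonneg _) (Ne.symm hs)
        have hts : t ≤ Real.sqrt (g i) := hi0min i hi
        have h1mh : 1 - h' i = (Real.sqrt (g i) - t) / Real.sqrt (g i) := by
          simp only [hh', if_pos hi]
          field_simp
        have hk : 0 ≤ (Real.sqrt (g i) - t) / Real.sqrt (g i) :=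
          div_nonneg (by linarith) hs0.le
        rw [if_pos hi, h1mh, Real.sqrt_mul (sq_nonneg _), Real.sqrt_sq hk]
        rw [show g i = Real.sqrt (g i) * Real.sqrt (g i) from
          (Real.mul_self_sqrt (evals_nonneg Ahat i)).symm]
        rw [Real.sqrt_mul_self (Real.sqrt_nonneg _)]
        field_simp
      · have hgz : g i = 0 := by
          by_contra hgz
          exact hi (Finset.mem_filter.mpr ⟨Finset.mem_univ i, hgz⟩)
        rw [if_neg hi, hgz]
        simp
    rw [Finset.sum_congr rfl (fun i _ => hterm i), Finset.sum_sub_distrib, nuclear_eq]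
    rw [Finset.sum_ite_mem, Finset.univ_inter, Finset.sum_const, nsmul_eq_mul, ← hc]
    ring
  -- optimality
  have hopt := hmin (Ahat - W)
  have htri : frobNorm (Ahat - W - X) ≤ frobNorm (Ahat - X) + frobNorm W := by
    have : Ahat - W - X = (Ahat - X) + (-W) := by abel
    rw [this]
    calc frobNorm ((Ahat - X) + (-W)) ≤ frobNorm (Ahat - X) + frobNorm (-W) :=
        frob_triangle _ _
      _ = frobNorm (Ahat - X) + frobNorm W := by rw [frob_neg]
  have hkey : lam * (t * c) ≤ t * Real.sqrt c := by
    have := hopt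
    rw [hnucAt] at this
    nlinarith [htri, hfrobW]
  have h2 : lam * c ≤ Real.sqrt c := by
    have := mul_le_mul_of_nonneg_left hkey (le_of_lt (inv_pos.mpr ht))
    calc lam * c = t⁻¹ * (lam * (t * c)) := by field_simp
      _ ≤ t⁻¹ * (t * Real.sqrt c) := this
      _ = Real.sqrt c := by field_simp
  have h3 : (lam * c)^2 ≤ c := by
    have hsc : Real.sqrt c ^ 2 = c := Real.sq_sqrt hc0.le
    nlinarith [mul_pos hlam hc0]
  rw [hrank, ← hc]
  nlinarith [h3, hc0]


end SR

set_option maxHeartbeats 2000000 in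
/-- Lemma 2 of the paper. -/
theorem stmt3 {m1 m2 : ℕ} (A0 X : Matrix (Fin m1) (Fin m2) ℝ) (hne : A0 ≠ X)
    (ρ lam : ℝ) (hρ : ρ < 1)
    (hlam1 : lam ≤ ρ / Real.sqrt (A0.rank))
    (hlam2 : 3 * opNorm (X - A0) / frobNorm (X - A0) ≤ lam)
    (Ahat : Matrix (Fin m1) (Fin m2) ℝ)
    (hmin : ∀ A : Matrix (Fin m1) (Fin m2) ℝ,
      frobNorm (Ahat - X) + lam * nuclearNorm Ahat ≤ frobNorm (A - X) + lam * nuclearNorm A) :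
    ((3 - Real.sqrt (1 + ρ ^ 2)) / (3 + Real.sqrt (1 + ρ ^ 2))) * frobNorm (A0 - X) ≤
      frobNorm (Ahat - X) := by
  classical
  open SR in
  have hD0 : A0 - X ≠ 0 := sub_ne_zero.mpr hne
  have hXA0 : X - A0 ≠ 0 := sub_ne_zero.mpr (Ne.symm hne)
  set d : ℝ := frobNorm (A0 - X) with hd
  set e : ℝ := frobNorm (Ahat - X) with he
  have hdpos : 0 < d := SR.frob_pos hD0
  have he0 : 0 ≤ e := SR.frob_nonneg _
  have hdXA : frobNorm (X - A0) = d := by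
    rw [hd, show A0 - X = -(X - A0) from (neg_sub _ _).symm, SR.frob_neg]
  have hopos : 0 < opNorm (X - A0) := SR.opNorm_pos hXA0
  have hlam0 : 0 < lam := by
    refine lt_of_lt_of_le ?_ hlam2
    rw [hdXA]
    positivity
  -- rank of A0 is at least 1
  have hr1 : 1 ≤ A0.rank := by
    by_contra h
    push_neg at h
    have hA : A0.rank = 0 := Nat.lt_one_iff.mp h
    rw [hA] at hlam1
    simp at hlam1
    linarith
  have hsr : 0 < Real.sqrt (A0.rank : ℝ) := by
    apply Real.sqrt_pos.mpr
    exact_mod_cast Nat.lt_of_lt_of_le Nat.zero_lt_one hr1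
  have hlamr : lam * Real.sqrt (A0.rank : ℝ) ≤ ρ := (le_div_iff₀ hsr).mp hlam1
  have hρpos : 0 < ρ := lt_of_lt_of_le (by positivity) hlamr
  set s : ℝ := Real.sqrt (1 + ρ ^ 2) with hs
  have hs0 : 0 ≤ s := Real.sqrt_nonneg _
  -- rank bound for the minimizer
  have hrb : lam ^ 2 * (Ahat.rank : ℝ) ≤ 1 := SR.rank_bound hlam0 X Ahat hmin
  have hrankD : ((A0 - Ahat).rank : ℝ) ≤ (A0.rank : ℝ) + (Ahat.rank : ℝ) := by
    exact_mod_cast SR.rank_sub_le A0 Ahat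
  have hlsqr : lam * Real.sqrt ((A0 - Ahat).rank : ℝ) ≤ s := by
    have hr2 : lam ^ 2 * (A0.rank : ℝ) ≤ ρ ^ 2 := by
      have h1 : (lam * Real.sqrt (A0.rank : ℝ)) ^ 2 ≤ ρ ^ 2 := by
        apply sq_le_sq' _ hlamr
        nlinarith [mul_nonneg hlam0.le hsr.le]
      have h2 : Real.sqrt ((A0.rank : ℝ)) ^ 2 = (A0.rank : ℝ) :=
        Real.sq_sqrt (by positivity)
      nlinarith
    have h1 : lam ^ 2 * ((A0 - Ahat).rank : ℝ) ≤ 1 + ρ ^ 2 := by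
      nlinarith [hrb, hrankD, sq_nonneg lam]
    calc lam * Real.sqrt ((A0 - Ahat).rank : ℝ)
        = Real.sqrt (lam ^ 2 * ((A0 - Ahat).rank : ℝ)) := by
          rw [Real.sqrt_mul (sq_nonneg lam), Real.sqrt_sq hlam0.le]
      _ ≤ s := by
          rw [hs]
          exact Real.sqrt_le_sqrt h1
  -- operator norm bound
  have hop3 : 3 * opNorm (A0 - X) ≤ lam * d := by
    have : opNorm (A0 - X) = opNorm (X - A0) := by
      rw [show A0 - X = -(X - A0) from (neg_sub _ _).symm, SR.opNorm_neg]
    rw [this]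
    rw [hdXA] at hlam2
    calc 3 * opNorm (X - A0) = (3 * opNorm (X - A0) / d) * d := by field_simp
      _ ≤ lam * d := mul_le_mul_of_nonneg_right hlam2 hdpos.le
  -- main chain
  have hfrobD : frobNorm (A0 - Ahat) ≤ e + d := by
    have : A0 - Ahat = (A0 - X) + (-(Ahat - X)) := by abel
    rw [this]
    calc frobNorm ((A0 - X) + (-(Ahat - X)))
        ≤ frobNorm (A0 - X) + frobNorm (-(Ahat - X)) := SR.frob_triangle _ _
      _ = d + e := by rw [SR.frob_neg]
      _ = e + d := by ring
  have hnucD : nuclearNorm (A0 - Ahat) ≤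
      Real.sqrt (((A0 - Ahat).rank : ℕ) : ℝ) * frobNorm (A0 - Ahat) :=
    SR.nuclear_le_sqrt_rank_mul_frob _
  have hdual : SR.mip (A0 - X) (A0 - Ahat) ≤ opNorm (A0 - X) * nuclearNorm (A0 - Ahat) :=
    SR.mip_le_op_mul_nuclear _ _
  have hnucD0 : 0 ≤ nuclearNorm (A0 - Ahat) := by
    rw [SR.nuclear_eq]
    exact Finset.sum_nonneg fun i _ => Real.sqrt_nonneg _
  have hop0 : 0 ≤ opNorm (A0 - X) := by
    rw [show A0 - X = -(X - A0) from (neg_sub _ _).symm, SR.opNorm_neg]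
    exact hopos.le
  have hDd : SR.mip (A0 - X) (A0 - Ahat) ≤ s * (d * (e + d)) / 3 := by
    have hsrD0 : 0 ≤ Real.sqrt (((A0 - Ahat).rank : ℕ) : ℝ) := Real.sqrt_nonneg _
    have hfD0 : 0 ≤ frobNorm (A0 - Ahat) := SR.frob_nonneg _
    calc SR.mip (A0 - X) (A0 - Ahat)
        ≤ opNorm (A0 - X) * nuclearNorm (A0 - Ahat) := hdual
      _ ≤ opNorm (A0 - X) *
          (Real.sqrt (((A0 - Ahat).rank : ℕ) : ℝ) * frobNorm (A0 - Ahat)) :=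
          mul_le_mul_of_nonneg_left hnucD hop0
      _ ≤ (lam * d / 3) * (Real.sqrt (((A0 - Ahat).rank : ℕ) : ℝ) * frobNorm (A0 - Ahat)) := by
          apply mul_le_mul_of_nonneg_right _ (mul_nonneg hsrD0 hfD0)
          linarith
      _ = (d / 3) * ((lam * Real.sqrt (((A0 - Ahat).rank : ℕ) : ℝ)) * frobNorm (A0 - Ahat)) := by
          ring
      _ ≤ (d / 3) * (s * (e + d)) := by
          apply mul_le_mul_of_nonneg_left _ (by positivity)
          calc (lam * Real.sqrt (((A0 - Ahat).rank : ℕ) : ℝ)) * frobNorm (A0 - Ahat)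
              ≤ s * frobNorm (A0 - Ahat) := by
                apply mul_le_mul_of_nonneg_right hlsqr hfD0
            _ ≤ s * (e + d) := mul_le_mul_of_nonneg_left hfrobD hs0
      _ = s * (d * (e + d)) / 3 := by ring
  have hsplit : d ^ 2 ≤ d * e + s * (d * (e + d)) / 3 := by
    have h1 : d ^ 2 = SR.mip (A0 - X) (A0 - X) := SR.frob_sq _
    have h2 : SR.mip (A0 - X) (A0 - X) =
        SR.mip (A0 - X) (Ahat - X) + SR.mip (A0 - X) (A0 - Ahat) := by
      rw [← SR.mip_add_right]
      congr 1
      abel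
    have hcs : SR.mip (A0 - X) (Ahat - X) ≤ d * e := SR.mip_cs _ _
    linarith [hDd]
  have hlast : (3 - s) * d ≤ (3 + s) * e := by
    nlinarith [hsplit, hdpos, he0, hs0]
  rw [div_mul_eq_mul_div, div_le_iff₀ (by positivity : (0:ℝ) < 3 + s)]
  nlinarith [hlast]
end

section
/- Let $V \in \mathbb{R}^{l \times m_1}$, $U \in \mathbb{R}^{l \times m_2}$, $\lambda > 0$, and let $\hat A$ minimize $A \mapsto \|U - VA\|_2 + \lambda \|VA\|_1$ over $A \in \mathbb{R}^{m_1 \times m_2}$, where $\|\cdot\|_2$ is the Frobenius norm and $\|\cdot\|_1$ the nuclear norm. Then $\mathrm{rank}(V\hat A) \le 1/\lambda^2$. -/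
open Matrix

namespace Stmt6Aux

/-- Euclidean-space avatar of a matrix. -/
noncomputable def toE {m n : ℕ} (A : Matrix (Fin m) (Fin n) ℝ) :
    EuclideanSpace ℝ (Fin m × Fin n) :=
  (WithLp.equiv 2 _).symm (fun p => A p.1 p.2)

lemma toE_add {m n : ℕ} (A B : Matrix (Fin m) (Fin n) ℝ) :
    toE (A + B) = toE A + toE B := rfl

lemma toE_smul {m n : ℕ} (t : ℝ) (A : Matrix (Fin m) (Fin n) ℝ) :
    toE (t • A) = t • toE A := rfl

lemma frob_eq_norm {m n : ℕ} (A : Matrix (Fin m) (Fin n) ℝ) :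
    frobNorm A = ‖toE A‖ := by
  rw [EuclideanSpace.norm_eq, frobNorm]
  congr 1
  rw [Fintype.sum_prod_type]
  simp [toE, Real.norm_eq_abs, sq_abs]

lemma frob_add_le {m n : ℕ} (A B : Matrix (Fin m) (Fin n) ℝ) :
    frobNorm (A + B) ≤ frobNorm A + frobNorm B := by
  simp only [frob_eq_norm, toE_add]; exact norm_add_le _ _

lemma frob_smul {m n : ℕ} (t : ℝ) (A : Matrix (Fin m) (Fin n) ℝ) :
    frobNorm (t • A) = |t| * frobNorm A := by
  simp only [frob_eq_norm, toE_smul, norm_smul, Real.norm_eq_abs]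

lemma frob_sq {m n : ℕ} (A : Matrix (Fin m) (Fin n) ℝ) :
    frobNorm A = Real.sqrt (Aᴴ * A).trace := by
  rw [frobNorm]
  congr 1
  rw [Matrix.trace]
  rw [Finset.sum_comm]
  simp [Matrix.diag, Matrix.mul_apply, Matrix.conjTranspose_apply, sq]

variable {n : ℕ} (Q : Matrix.unitaryGroup (Fin n) ℝ)

lemma star_mul_self : star (Q : Matrix (Fin n) (Fin n) ℝ) * Q = 1 :=
  mem_unitaryGroup_iff'.mp Q.2

lemma conj_mul (a b : Fin n → ℝ) :
    ((Q : Matrix (Fin n) (Fin n) ℝ) * diagonal a * star (Q : Matrix (Fin n) (Fin n) ℝ)) *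
      ((Q : Matrix (Fin n) (Fin n) ℝ) * diagonal b * star (Q : Matrix (Fin n) (Fin n) ℝ)) =
    (Q : Matrix (Fin n) (Fin n) ℝ) * diagonal (fun i => a i * b i) *
      star (Q : Matrix (Fin n) (Fin n) ℝ) := by
  have h := star_mul_self Q
  calc ((Q : Matrix (Fin n) (Fin n) ℝ) * diagonal a * star (Q : Matrix (Fin n) (Fin n) ℝ)) *
      ((Q : Matrix (Fin n) (Fin n) ℝ) * diagonal b * star (Q : Matrix (Fin n) (Fin n) ℝ))
      = (Q : Matrix (Fin n) (Fin n) ℝ) * (diagonal a *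
        ((star (Q : Matrix (Fin n) (Fin n) ℝ) * Q) * diagonal b)) *
        star (Q : Matrix (Fin n) (Fin n) ℝ) := by
        simp only [Matrix.mul_assoc]
    _ = _ := by rw [h, Matrix.one_mul, Matrix.diagonal_mul_diagonal]

lemma conj_conjTranspose (a : Fin n → ℝ) :
    ((Q : Matrix (Fin n) (Fin n) ℝ) * diagonal a * star (Q : Matrix (Fin n) (Fin n) ℝ))ᴴ =
    (Q : Matrix (Fin n) (Fin n) ℝ) * diagonal a * star (Q : Matrix (Fin n) (Fin n) ℝ) := by
  simp only [star_eq_conjTranspose, conjTranspose_mul, conjTranspose_conjTranspose,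
    diagonal_conjTranspose, star_trivial, Matrix.mul_assoc]

lemma trace_conj (a : Fin n → ℝ) :
    ((Q : Matrix (Fin n) (Fin n) ℝ) * diagonal a * star (Q : Matrix (Fin n) (Fin n) ℝ)).trace =
      ∑ i, a i := by
  rw [trace_mul_comm, ← Matrix.mul_assoc, star_mul_self Q, Matrix.one_mul, trace_diagonal]

lemma conj_posSemidef (a : Fin n → ℝ) (ha : ∀ i, 0 ≤ a i) :
    ((Q : Matrix (Fin n) (Fin n) ℝ) * diagonal a * star (Q : Matrix (Fin n) (Fin n) ℝ)).PosSemidef := by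
  have : (diagonal a).PosSemidef := posSemidef_diagonal_iff.mpr ha
  simpa [star_eq_conjTranspose] using this.mul_mul_conjTranspose_same (Q : Matrix (Fin n) (Fin n) ℝ)


lemma smul_conj (t : ℝ) (a : Fin n → ℝ) :
    t • ((Q : Matrix (Fin n) (Fin n) ℝ) * diagonal a * star (Q : Matrix (Fin n) (Fin n) ℝ)) =
    (Q : Matrix (Fin n) (Fin n) ℝ) * diagonal (fun i => t * a i) *
      star (Q : Matrix (Fin n) (Fin n) ℝ) := by
  rw [← Matrix.smul_mul, ← Matrix.mul_smul, ← diagonal_smul]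
  rfl

lemma conj_sub (a b : Fin n → ℝ) :
    (Q : Matrix (Fin n) (Fin n) ℝ) * diagonal a * star (Q : Matrix (Fin n) (Fin n) ℝ) -
      (Q : Matrix (Fin n) (Fin n) ℝ) * diagonal b * star (Q : Matrix (Fin n) (Fin n) ℝ) =
    (Q : Matrix (Fin n) (Fin n) ℝ) * diagonal (fun i => a i - b i) *
      star (Q : Matrix (Fin n) (Fin n) ℝ) := by
  rw [← Matrix.sub_mul, ← Matrix.mul_sub, ← diagonal_sub]

end Stmt6Aux

namespace Stmt6Aux

lemma nuclearNorm_eq_of {m n : ℕ} (X : Matrix (Fin m) (Fin n) ℝ)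
    (Q : Matrix.unitaryGroup (Fin n) ℝ) (g : Fin n → ℝ) (hg : ∀ i, 0 ≤ g i)
    (h : Xᴴ * X = (Q : Matrix (Fin n) (Fin n) ℝ) * diagonal g *
      star (Q : Matrix (Fin n) (Fin n) ℝ)) :
    nuclearNorm X = ∑ i, Real.sqrt (g i) := by
  have hN : (Xᴴ * X).PosSemidef := posSemidef_conjTranspose_mul_self X
  have hH : (Xᴴ * X).IsHermitian := Matrix.isHermitian_conjTranspose_mul_self X
  set Q' := hH.eigenvectorUnitary with hQ'
  have hspec : Xᴴ * X = (Q' : Matrix (Fin n) (Fin n) ℝ) * diagonal hH.eigenvalues *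
      star (Q' : Matrix (Fin n) (Fin n) ℝ) := by
    have := hH.spectral_theorem
    rw [hQ']
    simpa [RCLike.ofReal_real_eq_id, Function.comp, Unitary.conjStarAlgAut_apply] using this
  set a : Fin n → ℝ := fun i => Real.sqrt (hH.eigenvalues i) with ha
  set b : Fin n → ℝ := fun i => Real.sqrt (g i) with hb
  have hS1 : ((Q' : Matrix (Fin n) (Fin n) ℝ) * diagonal a *
      star (Q' : Matrix (Fin n) (Fin n) ℝ)).PosSemidef :=
    conj_posSemidef Q' a (fun i => Real.sqrt_nonneg _)
  have hS2 : ((Q : Matrix (Fin n) (Fin n) ℝ) * diagonal b *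
      star (Q : Matrix (Fin n) (Fin n) ℝ)).PosSemidef :=
    conj_posSemidef Q b (fun i => Real.sqrt_nonneg _)
  have e1 : ((Q' : Matrix (Fin n) (Fin n) ℝ) * diagonal a *
      star (Q' : Matrix (Fin n) (Fin n) ℝ)) ^ 2 = Xᴴ * X := by
    rw [pow_two, conj_mul, hspec]
    have : (fun i => a i * a i) = hH.eigenvalues :=
      funext fun i => Real.mul_self_sqrt (hN.eigenvalues_nonneg i)
    rw [this]
  have e2 : ((Q : Matrix (Fin n) (Fin n) ℝ) * diagonal b *
      star (Q : Matrix (Fin n) (Fin n) ℝ)) ^ 2 = Xᴴ * X := by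
    rw [pow_two, conj_mul, h]
    have : (fun i => b i * b i) = g := funext fun i => Real.mul_self_sqrt (hg i)
    rw [this]
  open scoped MatrixOrder in
  have k1 : (Q' : Matrix (Fin n) (Fin n) ℝ) * diagonal a * star (Q' : Matrix (Fin n) (Fin n) ℝ) =
      CFC.sqrt (Xᴴ * X) := by
    rw [← e1]; exact (CFC.sqrt_sq _ hS1.nonneg).symm
  open scoped MatrixOrder in
  have k2 : (Q : Matrix (Fin n) (Fin n) ℝ) * diagonal b * star (Q : Matrix (Fin n) (Fin n) ℝ) =
      CFC.sqrt (Xᴴ * X) := by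
    rw [← e2]; exact (CFC.sqrt_sq _ hS2.nonneg).symm
  have ktr : ∑ i, a i = ∑ i, b i := by
    rw [← trace_conj Q' a, ← trace_conj Q b, k1, k2]
  calc nuclearNorm X = ∑ i, a i := rfl
    _ = ∑ i, b i := ktr

end Stmt6Aux

namespace Stmt6Aux

lemma spectral_real {n : ℕ} {M : Matrix (Fin n) (Fin n) ℝ} (hM : M.IsHermitian) :
    M = (hM.eigenvectorUnitary : Matrix (Fin n) (Fin n) ℝ) * diagonal hM.eigenvalues *
      star (hM.eigenvectorUnitary : Matrix (Fin n) (Fin n) ℝ) := by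
  have := hM.spectral_theorem
  simpa [RCLike.ofReal_real_eq_id, Function.comp, Unitary.conjStarAlgAut_apply] using this

end Stmt6Aux


open Stmt6Aux in
/-- If $\hat A$ minimizes $A ↦ ‖U - VA‖_2 + λ‖VA‖_1$ then $\mathrm{rank}(V\hat A) ≤ 1/λ^2$. -/
theorem stmt6 {l m1 m2 : ℕ} (V : Matrix (Fin l) (Fin m1) ℝ) (U : Matrix (Fin l) (Fin m2) ℝ)
    (lam : ℝ) (hlam : 0 < lam) (Ahat : Matrix (Fin m1) (Fin m2) ℝ)
    (hmin : ∀ A : Matrix (Fin m1) (Fin m2) ℝ,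
      frobNorm (U - V * Ahat) + lam * nuclearNorm (V * Ahat) ≤
        frobNorm (U - V * A) + lam * nuclearNorm (V * A)) :
    ((V * Ahat).rank : ℝ) ≤ 1 / lam ^ 2 := by
  classical
  set B := V * Ahat with hB
  have hH : (Bᴴ * B).IsHermitian := Matrix.isHermitian_conjTranspose_mul_self B
  have hN : (Bᴴ * B).PosSemidef := posSemidef_conjTranspose_mul_self B
  set μ : Fin m2 → ℝ := hH.eigenvalues with hμdef
  have hμ0 : ∀ i, 0 ≤ μ i := fun i => hN.eigenvalues_nonneg i
  set Q := hH.eigenvectorUnitary with hQdef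
  have hspec : Bᴴ * B = (Q : Matrix (Fin m2) (Fin m2) ℝ) * diagonal μ *
      star (Q : Matrix (Fin m2) (Fin m2) ℝ) := spectral_real hH
  set s : Finset (Fin m2) := Finset.univ.filter (fun i => μ i ≠ 0) with hs
  have hrank : B.rank = s.card := by
    rw [← rank_conjTranspose_mul_self B, hH.rank_eq_card_non_zero_eigs,
      Fintype.card_subtype]
  have hsumite : ∀ x : ℝ, ∑ i, (if μ i = 0 then (0:ℝ) else x) = s.card * x := by
    intro x
    have h1 : ∑ i ∈ s, x = ∑ i, (if μ i ≠ 0 then x else 0) := Finset.sum_filter _ _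
    have h2 : ∀ i : Fin m2, (if μ i ≠ 0 then x else (0:ℝ)) = if μ i = 0 then 0 else x :=
      fun i => ite_not _ _ _
    rw [← Finset.sum_congr rfl (fun i _ => h2 i), ← h1, Finset.sum_const, nsmul_eq_mul]
  have hnucB : nuclearNorm B = ∑ i, Real.sqrt (μ i) := rfl
  rcases Finset.eq_empty_or_nonempty s with hemp | hne
  · rw [hrank, hemp]
    simp
    positivity
  · set t := s.inf' hne (fun i => Real.sqrt (μ i)) with htdef
    have htle : ∀ i ∈ s, t ≤ Real.sqrt (μ i) := fun i hi => Finset.inf'_le _ hi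
    have htpos : 0 < t := by
      rw [htdef, Finset.lt_inf'_iff]
      intro i hi
      have : μ i ≠ 0 := (Finset.mem_filter.mp hi).2
      exact Real.sqrt_pos.mpr (lt_of_le_of_ne (hμ0 i) (Ne.symm this))
    set f : Fin m2 → ℝ := fun i => if μ i = 0 then 0 else 1 / Real.sqrt (μ i) with hfdef
    set W : Matrix (Fin m2) (Fin m2) ℝ :=
      (Q : Matrix (Fin m2) (Fin m2) ℝ) * diagonal f * star (Q : Matrix (Fin m2) (Fin m2) ℝ)
      with hWdef
    set c : Fin m2 → ℝ := fun i => 1 - t * f i with hcdef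
    set C : Matrix (Fin m2) (Fin m2) ℝ := 1 - t • W with hCdef
    have hC : C = (Q : Matrix (Fin m2) (Fin m2) ℝ) * diagonal c *
        star (Q : Matrix (Fin m2) (Fin m2) ℝ) := by
      have h1 : (1 : Matrix (Fin m2) (Fin m2) ℝ) = (Q : Matrix (Fin m2) (Fin m2) ℝ) *
          diagonal (fun _ => (1:ℝ)) * star (Q : Matrix (Fin m2) (Fin m2) ℝ) := by
        rw [diagonal_one, Matrix.mul_one, mem_unitaryGroup_iff.mp Q.2]
      have h2 : t • W = (Q : Matrix (Fin m2) (Fin m2) ℝ) * diagonal (fun i => t * f i) *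
          star (Q : Matrix (Fin m2) (Fin m2) ℝ) := by
        rw [hWdef]; exact smul_conj Q t f
      rw [hCdef]
      conv_lhs => rw [h1, h2]
      rw [conj_sub]
    have hconj : ∀ (X : Matrix (Fin m2) (Fin m2) ℝ) (a : Fin m2 → ℝ),
        X = (Q : Matrix (Fin m2) (Fin m2) ℝ) * diagonal a *
          star (Q : Matrix (Fin m2) (Fin m2) ℝ) →
        (B * X)ᴴ * (B * X) = (Q : Matrix (Fin m2) (Fin m2) ℝ) *
          diagonal (fun i => a i * (μ i * a i)) * star (Q : Matrix (Fin m2) (Fin m2) ℝ) := by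
      intro X a hX
      have hXh : Xᴴ = X := by rw [hX]; exact conj_conjTranspose Q a
      calc (B * X)ᴴ * (B * X) = Xᴴ * ((Bᴴ * B) * X) := by
            rw [conjTranspose_mul, Matrix.mul_assoc Xᴴ Bᴴ (B * X), ← Matrix.mul_assoc Bᴴ B X]
        _ = X * ((Bᴴ * B) * X) := by rw [hXh]
        _ = _ := by rw [hspec, hX, Stmt6Aux.conj_mul, Stmt6Aux.conj_mul]
    set g : Fin m2 → ℝ := fun i => c i * (μ i * c i) with hgdef
    have hg0 : ∀ i, 0 ≤ g i := by
      intro i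
      have : g i = μ i * (c i)^2 := by rw [hgdef]; ring
      rw [this]
      have := hμ0 i
      positivity
    have hsqrtg : ∀ i, Real.sqrt (g i) = Real.sqrt (μ i) - (if μ i = 0 then 0 else t) := by
      intro i
      by_cases hi : μ i = 0
      · simp [hgdef, hi]
      · have hmpos : 0 < μ i := lt_of_le_of_ne (hμ0 i) (Ne.symm hi)
        have hrpos : 0 < Real.sqrt (μ i) := Real.sqrt_pos.mpr hmpos
        have hself : Real.sqrt (μ i) * Real.sqrt (μ i) = μ i := Real.mul_self_sqrt (hμ0 i)
        have hti : t ≤ Real.sqrt (μ i) := htle i (by simp [hs, hi])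
        have hci : c i = (Real.sqrt (μ i) - t) / Real.sqrt (μ i) := by
          rw [hcdef]
          simp only [hfdef, if_neg hi]
          field_simp
        have hgi : g i = (Real.sqrt (μ i) - t)^2 := by
          rw [hgdef]
          simp only [hci]
          field_simp
          nlinarith [hself]
        rw [hgi, Real.sqrt_sq (by linarith), if_neg hi]
    have hnucBC : nuclearNorm (B * C) = (∑ i, Real.sqrt (μ i)) - s.card * t := by
      rw [nuclearNorm_eq_of (B * C) Q g hg0 (hconj C c hC)]
      calc ∑ i, Real.sqrt (g i)
          = ∑ i, (Real.sqrt (μ i) - if μ i = 0 then 0 else t) :=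
            Finset.sum_congr rfl (fun i _ => hsqrtg i)
        _ = (∑ i, Real.sqrt (μ i)) - ∑ i, (if μ i = 0 then (0:ℝ) else t) :=
            Finset.sum_sub_distrib _ _
        _ = _ := by rw [hsumite]
    have hfrobBW : frobNorm (B * W) = Real.sqrt s.card := by
      rw [frob_sq, hconj W f hWdef, Stmt6Aux.trace_conj]
      congr 1
      have : ∀ i, f i * (μ i * f i) = if μ i = 0 then (0:ℝ) else 1 := by
        intro i
        by_cases hi : μ i = 0
        · simp [hfdef, hi]
        · have hmpos : 0 < μ i := lt_of_le_of_ne (hμ0 i) (Ne.symm hi)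
          have hself : Real.sqrt (μ i) * Real.sqrt (μ i) = μ i := Real.mul_self_sqrt (hμ0 i)
          have hrpos : 0 < Real.sqrt (μ i) := Real.sqrt_pos.mpr hmpos
          simp only [hfdef, if_neg hi, if_neg hi]
          field_simp
          rw [Real.sq_sqrt (hμ0 i)]
      rw [Finset.sum_congr rfl (fun i _ => this i), hsumite, mul_one]
    have hUBC : U - B * C = (U - B) + t • (B * W) := by
      rw [hCdef, Matrix.mul_sub, Matrix.mul_one, Matrix.mul_smul]
      abel
    have hfroble : frobNorm (U - B * C) ≤ frobNorm (U - B) + t * Real.sqrt s.card := by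
      rw [hUBC]
      calc frobNorm ((U - B) + t • (B * W)) ≤ frobNorm (U - B) + frobNorm (t • (B * W)) :=
            frob_add_le _ _
        _ = frobNorm (U - B) + |t| * frobNorm (B * W) := by rw [frob_smul]
        _ = _ := by rw [abs_of_pos htpos, hfrobBW]
    have hVAC : V * (Ahat * C) = B * C := by rw [hB, Matrix.mul_assoc]
    have key : lam * (s.card * t) ≤ t * Real.sqrt s.card := by
      have h1 := hmin (Ahat * C)
      rw [hVAC, hnucBC] at h1
      rw [show nuclearNorm B = ∑ i, Real.sqrt (μ i) from hnucB] at h1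
      linarith [hfroble]
    have h2 : lam * (s.card : ℝ) ≤ Real.sqrt s.card := by
      have h3 : t * (lam * s.card) ≤ t * Real.sqrt s.card := by
        calc t * (lam * s.card) = lam * (s.card * t) := by ring
          _ ≤ t * Real.sqrt s.card := key
      exact le_of_mul_le_mul_left h3 htpos
    have hr0 : (0:ℝ) ≤ (s.card : ℝ) := Nat.cast_nonneg _
    have hself : Real.sqrt s.card * Real.sqrt s.card = (s.card : ℝ) :=
      Real.mul_self_sqrt hr0
    have h3 : lam * s.card * (lam * s.card) ≤ (s.card : ℝ) := by
      calc lam * (s.card:ℝ) * (lam * s.card) ≤ Real.sqrt s.card * Real.sqrt s.card :=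
            mul_le_mul h2 h2 (mul_nonneg hlam.le hr0) (Real.sqrt_nonneg _)
        _ = _ := hself
    rw [hrank, le_div_iff₀ (by positivity)]
    nlinarith [h3, hr0]
end
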